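/- For λ^{(•)} = (λ^{(n)} ⊃ ⋯ ⊃ λ^{(n-k)}) a chain in M(n,k) with cell contents w_i = χ(λ^{(n-i+1)} \ λ^{(n-i)}), the expression qt·B_{λ^{(n-k)}} + B*_{λ^{(n)}} − (t−1)(q−1)·B_{λ^{(n-k)}}·B*_{λ^{(n)}} + (q−1)·Σ_{k ≥ i ≥ j ≥ 1} w_i w_j^{-1} equals the expression obtained from qt·B_μ + B_μ* − (q−1)(t−1)·B_μ·B_μ* — where μ is the interleaved partition with B_μ = Σ_{i=0}^{k} t^i B_{λ^{(n-i)}}(q, t^{k+1}) — by extracting the terms whose t-degree is divisible by k+1 and substituting q^a t^{b(k+1)} ↦ q^a t^b. -/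

import Mathlib

noncomputable section

/-- Laurent polynomials in `q, t`, as the group algebra of `ℤ × ℤ` over ℚ. -/
abbrev LP : Type := AddMonoidAlgebra ℚ (ℤ × ℤ)

/-- The monomial `q^a t^b`. -/
def mn (a b : ℤ) : LP := AddMonoidAlgebra.single (a, b) 1

/-- `Σ_{□∈f} q^{ε c(□)} t^{ε s r(□)}`: for `ε = 1, s = 1` this is `B_f`, for
`ε = -1, s = 1` it is `B_f*`, and `s = k+1` realizes `B_f(q, t^{k+1})`. -/
def Bgen (f : ℕ → ℕ) (ε s : ℤ) : LP :=
  ∑ᶠ p : ℕ × ℕ, if p.2 < f p.1 then mn (ε * p.2) (ε * s * p.1) else 0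

/-- Extraction: keep monomials `q^a t^m` with `(k+1) ∣ m` and map them to
`q^a t^{m/(k+1)}`. -/
def extract (k : ℕ) (P : LP) : LP :=
  Finsupp.sum P.coeff fun m coef =>
    if ((k : ℤ) + 1) ∣ m.2 then
      AddMonoidAlgebra.single (m.1, m.2 / ((k : ℤ) + 1)) coef
    else 0

namespace Aux

lemma mn_mul (a b a' b' : ℤ) : mn a b * mn a' b' = mn (a + a') (b + b') := by
  simp [mn, AddMonoidAlgebra.single_mul_single, Prod.mk_add_mk]

lemma mn_zero : mn 0 0 = 1 := by
  simp [mn, AddMonoidAlgebra.one_def]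
  rfl

lemma mn_ne_zero (a b : ℤ) : mn a b ≠ 0 := by
  simp [mn, AddMonoidAlgebra.single_eq_zero]

/-- The support set of `Bgen` is finite. -/
lemma bgen_finite {f : ℕ → ℕ} (hf : (Function.support f).Finite) :
    ({p : ℕ × ℕ | p.2 < f p.1}).Finite := by
  apply Set.Finite.subset (Set.Finite.prod hf (Set.finite_Iio (hf.toFinset.sup f)))
  rintro ⟨a, b⟩ h
  simp only [Set.mem_setOf_eq] at h
  have ha : a ∈ Function.support f := by
    simp only [Function.mem_support]; omega
  constructor
  · exact ha
  · simp only [Set.mem_Iio]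
    exact lt_of_lt_of_le h (Finset.le_sup (hf.mem_toFinset.2 ha))

def ψ (k : ℕ) : ℤ × ℤ →+ ℤ × ℤ where
  toFun p := (p.1, ((k : ℤ) + 1) * p.2)
  map_zero' := by simp
  map_add' p q := by simp [Prod.add_def]; ring

def φ (k : ℕ) : LP →+* LP := AddMonoidAlgebra.mapDomainRingHom ℚ (ψ k)

lemma φ_single (k : ℕ) (m : ℤ × ℤ) (v : ℚ) :
    φ k (AddMonoidAlgebra.single m v)
      = AddMonoidAlgebra.single (m.1, ((k : ℤ) + 1) * m.2) v := by
  simp [φ, AddMonoidAlgebra.mapDomainRingHom, Finsupp.mapDomain_single, ψ]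

lemma φ_mn (k : ℕ) (a b : ℤ) : φ k (mn a b) = mn a (((k : ℤ) + 1) * b) := by
  simp [mn, φ_single]

lemma Bgen_eq_phi {f : ℕ → ℕ} (hf : (Function.support f).Finite) (k : ℕ) (ε : ℤ) :
    Bgen f ε ((k : ℤ) + 1) = φ k (Bgen f ε 1) := by
  have hsupp : (Function.support fun p : ℕ × ℕ =>
      if p.2 < f p.1 then mn (ε * p.2) (ε * 1 * p.1) else 0).Finite := by
    apply (bgen_finite hf).subset
    intro p hp
    simp only [Function.mem_support] at hp
    by_contra h
    simp only [Set.mem_setOf_eq] at h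
    simp [h] at hp
  rw [Bgen, Bgen,
    show (φ k) (∑ᶠ p : ℕ × ℕ, if p.2 < f p.1 then mn (ε * p.2) (ε * 1 * p.1) else 0)
      = (φ k).toAddMonoidHom (∑ᶠ p : ℕ × ℕ, if p.2 < f p.1 then mn (ε * p.2) (ε * 1 * p.1) else 0)
      from rfl,
    ((φ k).toAddMonoidHom).map_finsum hsupp]
  apply finsum_congr
  intro p
  by_cases h : p.2 < f p.1 <;> simp [h, φ_mn]
  congr 1
  ring

lemma Bgen_update {f : ℕ → ℕ} (hf : (Function.support f).Finite) (r : ℕ) (ε s : ℤ) :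
    Bgen (Function.update f r (f r + 1)) ε s
      = Bgen f ε s + mn (ε * f r) (ε * s * r) := by
  have key : ∀ p : ℕ × ℕ,
      (if p.2 < Function.update f r (f r + 1) p.1 then mn (ε * p.2) (ε * s * p.1) else 0)
      = (if p.2 < f p.1 then mn (ε * p.2) (ε * s * p.1) else 0)
        + (if p = (r, f r) then mn (ε * p.2) (ε * s * p.1) else 0) := by
    rintro ⟨a, b⟩
    rcases eq_or_ne a r with rfl | ha
    · rw [Function.update_self]
      rcases lt_trichotomy b (f a) with h | rfl | h
      · have h1 : b < f a + 1 := by omega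
        have h2 : (a, b) ≠ (a, f a) := by simp; omega
        simp [h, h1, h2]
      · simp
      · have h1 : ¬ b < f a + 1 := by omega
        have h2 : ¬ b < f a := by omega
        have h3 : (a, b) ≠ (a, f a) := by simp; omega
        simp [h1, h2, h3]
    · rw [Function.update_of_ne ha]
      have h3 : (a, b) ≠ (r, f r) := by simp [ha]
      simp [h3]
  rw [Bgen, Bgen]
  calc ∑ᶠ p : ℕ × ℕ, (if p.2 < Function.update f r (f r + 1) p.1 then mn (ε * p.2) (ε * s * p.1) else 0)
      = ∑ᶠ p : ℕ × ℕ, ((if p.2 < f p.1 then mn (ε * p.2) (ε * s * p.1) else 0)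
        + (if p = (r, f r) then mn (ε * p.2) (ε * s * p.1) else 0)) := finsum_congr key
    _ = (∑ᶠ p : ℕ × ℕ, if p.2 < f p.1 then mn (ε * p.2) (ε * s * p.1) else 0)
        + ∑ᶠ p : ℕ × ℕ, (if p = (r, f r) then mn (ε * p.2) (ε * s * p.1) else 0) := by
        apply finsum_add_distrib
        · apply (bgen_finite hf).subset
          intro p hp
          simp only [Function.mem_support] at hp
          by_contra h
          simp only [Set.mem_setOf_eq] at h
          simp [h] at hp
        · apply (Set.finite_singleton ((r, f r) : ℕ × ℕ)).subset
          intro p hp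
          simp only [Function.mem_support] at hp
          by_contra h
          simp only [Set.mem_singleton_iff] at h
          simp [h] at hp
    _ = (∑ᶠ p : ℕ × ℕ, if p.2 < f p.1 then mn (ε * p.2) (ε * s * p.1) else 0)
        + mn (ε * f r) (ε * s * r) := by
        congr 1
        rw [finsum_eq_single _ ((r, f r) : ℕ × ℕ)]
        · simp
        · intro p hp; simp [hp]

end Aux


namespace Aux

lemma extract_single (k : ℕ) (m : ℤ × ℤ) (v : ℚ) :
    extract k (AddMonoidAlgebra.single m v)
      = if ((k : ℤ) + 1) ∣ m.2 then
          AddMonoidAlgebra.single (m.1, m.2 / ((k : ℤ) + 1)) v else 0 := by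
  rw [extract, AddMonoidAlgebra.coeff_single]
  apply Finsupp.sum_single_index
  split <;> simp

lemma extract_zero (k : ℕ) : extract k 0 = 0 := by
  simp [extract]

lemma extract_add (k : ℕ) (P Q : LP) :
    extract k (P + Q) = extract k P + extract k Q := by
  rw [extract, extract, extract, AddMonoidAlgebra.coeff_add, Finsupp.sum_add_index]
  · intro m _; split <;> simp
  · intro m _ a b; split <;> simp

def Ehom (k : ℕ) : LP →+ LP where
  toFun := extract k
  map_zero' := extract_zero k
  map_add' := extract_add k

lemma extract_sub (k : ℕ) (P Q : LP) :
    extract k (P - Q) = extract k P - extract k Q :=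
  map_sub (Ehom k) P Q

lemma extract_sum {α : Type*} (k : ℕ) (s : Finset α) (f : α → LP) :
    extract k (∑ i ∈ s, f i) = ∑ i ∈ s, extract k (f i) :=
  map_sum (Ehom k) f s

lemma extract_mn_phi (k : ℕ) (a b : ℤ) (P : LP) :
    extract k (mn a b * φ k P)
      = if ((k : ℤ) + 1) ∣ b then mn a (b / ((k : ℤ) + 1)) * P else 0 := by
  induction P using AddMonoidAlgebra.induction_linear with
  | zero => simp [extract_zero]
  | add P Q hP hQ =>
      rw [map_add, mul_add, extract_add, hP, hQ]
      split <;> simp [mul_add]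
  | single m v =>
      rw [φ_single]
      have : mn a b * AddMonoidAlgebra.single (m.1, ((k : ℤ) + 1) * m.2) v
          = AddMonoidAlgebra.single (a + m.1, b + ((k : ℤ) + 1) * m.2) v := by
        rw [mn, AddMonoidAlgebra.single_mul_single, one_mul, Prod.mk_add_mk]
      rw [this, extract_single]
      have hk : ((k : ℤ) + 1) ≠ 0 := by positivity
      have hdvd : (((k : ℤ) + 1) ∣ b + ((k : ℤ) + 1) * m.2) ↔ (((k : ℤ) + 1) ∣ b) := by
        constructor
        · intro h; have := dvd_sub h (Dvd.intro m.2 rfl); simpa using this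
        · intro h; exact dvd_add h (Dvd.intro m.2 rfl)
      rw [if_congr hdvd rfl rfl]
      split
      · rename_i h
        have : (b + ((k : ℤ) + 1) * m.2) / ((k : ℤ) + 1) = b / ((k : ℤ) + 1) + m.2 := by
          rw [mul_comm, Int.add_mul_ediv_right _ _ hk]
        rw [this, mn, AddMonoidAlgebra.single_mul_single, one_mul, Prod.mk_add_mk]
      · rfl

/-- telescoping -/
lemma tele {R : Type*} [CommRing R] (b w : ℕ → R) (k : ℕ)
    (hb : ∀ i < k, b i = b (i + 1) + w i) :
    ∀ j ≤ k, b j + ∑ i ∈ Finset.range j, w i = b 0 := by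
  intro j
  induction j with
  | zero => simp
  | succ m ih =>
      intro hm
      have h1 := ih (by omega)
      have h2 := hb m (by omega)
      rw [Finset.sum_range_succ]
      linear_combination h1 - h2

lemma sum_key {R : Type*} [CommRing R] (b b' w w' : ℕ → R) (k : ℕ)
    (hb : ∀ i < k, b i = b (i + 1) + w i) (hb' : ∀ i < k, b' i = b' (i + 1) + w' i) :
    ∑ i ∈ Finset.range (k + 1), b i * b' i - ∑ i ∈ Finset.range k, b i * b' (i + 1)
      - b k * b' 0
    = ∑ i ∈ Finset.range k, ∑ j ∈ Finset.range (i + 1), w i * w' j := by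
  have htele : ∀ j ≤ k, b j = b k + (∑ i ∈ Finset.range k, w i - ∑ i ∈ Finset.range j, w i) := by
    intro j hj
    have h1 := tele b w k hb j hj
    have h2 := tele b w k hb k le_rfl
    rw [← h2] at h1
    linear_combination h1
  have htele' : b' 0 = b' k + ∑ i ∈ Finset.range k, w' i := by
    have := tele b' w' k hb' k le_rfl
    linear_combination -this
  -- step 1
  have step1 : ∑ i ∈ Finset.range (k + 1), b i * b' i - ∑ i ∈ Finset.range k, b i * b' (i + 1)
      - b k * b' 0
    = ∑ i ∈ Finset.range k, (b i - b k) * w' i := by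
    rw [Finset.sum_range_succ]
    have : ∑ i ∈ Finset.range k, b i * b' i - ∑ i ∈ Finset.range k, b i * b' (i + 1)
        = ∑ i ∈ Finset.range k, b i * w' i := by
      rw [← Finset.sum_sub_distrib]
      apply Finset.sum_congr rfl
      intro i hi
      have := hb' i (Finset.mem_range.1 hi)
      linear_combination b i * this
    have expand : ∑ i ∈ Finset.range k, (b i - b k) * w' i
        = ∑ i ∈ Finset.range k, b i * w' i - b k * ∑ i ∈ Finset.range k, w' i := by
      rw [Finset.mul_sum, ← Finset.sum_sub_distrib]
      apply Finset.sum_congr rfl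
      intro i _
      ring
    linear_combination this - expand - b k * htele'
  rw [step1]
  -- step 2 : b i - b k = ∑_{j ∈ Ico i k} w j
  have step2 : ∀ i ∈ Finset.range k, (b i - b k) * w' i
      = ∑ j ∈ Finset.Ico i k, w j * w' i := by
    intro i hi
    have hik : i ≤ k := le_of_lt (Finset.mem_range.1 hi)
    rw [Finset.sum_Ico_eq_sub _ hik, htele i hik, ← Finset.sum_mul, ← Finset.sum_mul]
    ring
  rw [Finset.sum_congr rfl step2]
  -- step 3: swap
  have hIco : ∀ i, i < k → Finset.Ico i k = (Finset.range k).filter (fun j => i ≤ j) := by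
    intro i _
    ext x
    simp [Finset.mem_Ico, Finset.mem_filter, Finset.mem_range]
    omega
  calc ∑ i ∈ Finset.range k, ∑ j ∈ Finset.Ico i k, w j * w' i
      = ∑ i ∈ Finset.range k, ∑ j ∈ Finset.range k, if i ≤ j then w j * w' i else 0 := by
        apply Finset.sum_congr rfl
        intro i hi
        rw [hIco i (Finset.mem_range.1 hi), Finset.sum_filter]
    _ = ∑ j ∈ Finset.range k, ∑ i ∈ Finset.range k, if i ≤ j then w j * w' i else 0 :=
        Finset.sum_comm
    _ = ∑ j ∈ Finset.range k, ∑ i ∈ Finset.range (j + 1), w j * w' i := by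
        apply Finset.sum_congr rfl
        intro j hj
        rw [← Finset.sum_filter]
        congr 1
        ext x
        simp only [Finset.mem_filter, Finset.mem_range]
        have := Finset.mem_range.1 hj
        omega

end Aux

namespace Aux

lemma dvd_qt (k : ℕ) (i : Fin (k + 1)) :
    (((k : ℤ) + 1) ∣ (1 + (i : ℤ))) ↔ i = Fin.last k := by
  constructor
  · intro h
    have h1 : ((k : ℤ) + 1) ≤ 1 + (i : ℤ) :=
      Int.le_of_dvd (by positivity) h
    have h2 : (i : ℕ) ≤ k := Fin.is_le i
    apply Fin.ext
    simp only [Fin.val_last]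
    omega
  · rintro rfl
    simp only [Fin.val_last]
    exact ⟨1, by ring⟩

lemma dvd_st (k : ℕ) (i : Fin (k + 1)) :
    (((k : ℤ) + 1) ∣ (-(i : ℤ))) ↔ i = 0 := by
  constructor
  · intro h
    have h2 : (i : ℕ) ≤ k := Fin.is_le i
    have := Int.eq_zero_of_abs_lt_dvd h (by rw [abs_neg, abs_of_nonneg (by positivity)]; omega)
    apply Fin.ext
    simp only [Fin.val_zero]
    omega
  · rintro rfl
    simp

lemma dvd_diag (k : ℕ) (i j : Fin (k + 1)) :
    (((k : ℤ) + 1) ∣ ((i : ℤ) - (j : ℤ))) ↔ j = i := by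
  constructor
  · intro h
    have h2 : (i : ℕ) ≤ k := Fin.is_le i
    have h3 : (j : ℕ) ≤ k := Fin.is_le j
    have := Int.eq_zero_of_abs_lt_dvd h (by rw [abs_lt]; omega)
    apply Fin.ext
    omega
  · rintro rfl
    simp

lemma dvd_off (k : ℕ) (i j : Fin (k + 1)) :
    (((k : ℤ) + 1) ∣ ((i : ℤ) - (j : ℤ) + 1)) ↔ j = i + 1 := by
  have h2 : (i : ℕ) ≤ k := Fin.is_le i
  have h3 : (j : ℕ) ≤ k := Fin.is_le j
  have hval := Fin.val_add_one i
  constructor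
  · intro h
    rcases le_or_gt ((i : ℤ) - (j : ℤ) + 1) 0 with hle | hpos
    · have := Int.eq_zero_of_abs_lt_dvd h (by rw [abs_lt]; omega)
      apply Fin.ext
      rw [hval]
      split
      · rename_i hlast
        subst hlast
        simp only [Fin.val_last] at this ⊢
        omega
      · rename_i hlast
        have : (j : ℕ) = (i : ℕ) + 1 := by omega
        omega
    · have h1 : ((k : ℤ) + 1) ≤ (i : ℤ) - (j : ℤ) + 1 := Int.le_of_dvd hpos h
      have hik : (i : ℕ) = k ∧ (j : ℕ) = 0 := by omega
      apply Fin.ext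
      rw [hval]
      have hlast : i = Fin.last k := by apply Fin.ext; simp [hik.1]
      rw [if_pos hlast]
      omega
  · rintro rfl
    rw [hval]
    split
    · rename_i hlast
      subst hlast
      simp only [Fin.val_last]
      exact ⟨1, by push_cast; ring⟩
    · rename_i hlast
      have : (i : ℕ) < k := by
        rcases lt_or_eq_of_le h2 with h | h
        · exact h
        · exact absurd (Fin.ext (by simp [h]) : i = Fin.last k) hlast
      exact ⟨0, by push_cast; ring⟩

end Aux

namespace Aux

lemma mn_comb {a b a' b' A B : ℤ} (hA : a + a' = A) (hB : b + b' = B) :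
    mn a b * mn a' b' = mn A B := by rw [mn_mul, hA, hB]

lemma expand_qt (d : ℤ) : (mn 1 0 - 1) * (mn 0 1 - 1) * mn 0 d
    = mn 1 (d + 1) - mn 0 (d + 1) - (mn 1 d - mn 0 d) := by
  have e1 : mn 0 1 * mn 0 d = mn 0 (d + 1) := mn_comb (by ring) (by ring)
  have e2 : mn 1 0 * mn 0 (d + 1) = mn 1 (d + 1) := mn_comb (by ring) (by ring)
  have e3 : mn 1 0 * mn 0 d = mn 1 d := mn_comb (by ring) (by ring)
  calc (mn 1 0 - 1) * (mn 0 1 - 1) * mn 0 d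
      = mn 1 0 * (mn 0 1 * mn 0 d) - (mn 0 1 * mn 0 d) - mn 1 0 * mn 0 d + mn 0 d := by ring
    _ = _ := by rw [e1, e2, e3]; ring

end Aux

namespace Aux

def nbp (k : ℕ) (c : Fin (k + 1) → ℕ → ℕ) : ℕ → LP :=
  fun m => if h : m < k + 1 then Bgen (c ⟨m, h⟩) 1 1 else 0

def nbm (k : ℕ) (c : Fin (k + 1) → ℕ → ℕ) : ℕ → LP :=
  fun m => if h : m < k + 1 then Bgen (c ⟨m, h⟩) (-1) 1 else 0

def nwp (k : ℕ) (c : Fin (k + 1) → ℕ → ℕ) (row : Fin k → ℕ) : ℕ → LP :=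
  fun m => if h : m < k then
    mn (c (Fin.succ ⟨m, h⟩) (row ⟨m, h⟩) : ℤ) (row ⟨m, h⟩ : ℤ) else 0

def nwm (k : ℕ) (c : Fin (k + 1) → ℕ → ℕ) (row : Fin k → ℕ) : ℕ → LP :=
  fun m => if h : m < k then
    mn (-(c (Fin.succ ⟨m, h⟩) (row ⟨m, h⟩) : ℤ)) (-(row ⟨m, h⟩ : ℤ)) else 0

variable {k : ℕ} {c : Fin (k + 1) → ℕ → ℕ} {row : Fin k → ℕ}

lemma nbp_coe (i : Fin (k + 1)) : nbp k c (i : ℕ) = Bgen (c i) 1 1 := by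
  simp only [nbp]
  rw [dif_pos i.is_lt]

lemma nbm_coe (i : Fin (k + 1)) : nbm k c (i : ℕ) = Bgen (c i) (-1) 1 := by
  simp only [nbm]
  rw [dif_pos i.is_lt]

lemma nbp_cast (i : Fin k) : nbp k c (i : ℕ) = Bgen (c i.castSucc) 1 1 := by
  rw [show ((i : ℕ)) = ((i.castSucc : Fin (k + 1)) : ℕ) from (Fin.coe_castSucc i).symm,
    nbp_coe]

lemma nbm_succ (i : Fin k) : nbm k c ((i : ℕ) + 1) = Bgen (c i.succ) (-1) 1 := by
  rw [show ((i : ℕ) + 1) = ((i.succ : Fin (k + 1)) : ℕ) from (Fin.val_succ i).symm,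
    nbm_coe]

lemma nbp_last : nbp k c k = Bgen (c (Fin.last k)) 1 1 := by
  have := nbp_coe (c := c) (Fin.last k)
  simpa [Fin.val_last] using this

lemma nbm_zero : nbm k c 0 = Bgen (c 0) (-1) 1 := by
  have := nbm_coe (c := c) (0 : Fin (k + 1))
  simpa using this

lemma nwp_coe (i : Fin k) :
    nwp k c row (i : ℕ) = mn (c i.succ (row i) : ℤ) (row i : ℤ) := by
  simp only [nwp]
  rw [dif_pos i.is_lt]

lemma nwm_coe (i : Fin k) :
    nwm k c row (i : ℕ) = mn (-(c i.succ (row i) : ℤ)) (-(row i : ℤ)) := by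
  simp only [nwm]
  rw [dif_pos i.is_lt]

end Aux

/-- For a chain `λ⁽•⁾ ∈ M(n,k)` with marked cells of contents `w_i`, the
character formula
`qt B_{λ⁽ⁿ⁻ᵏ⁾} + B*_{λ⁽ⁿ⁾} − (t−1)(q−1) B_{λ⁽ⁿ⁻ᵏ⁾} B*_{λ⁽ⁿ⁾}
  + (q−1) Σ_{k ≥ i ≥ j ≥ 1} w_i w_j⁻¹`
equals the `(k+1)`-extraction of `qt B_μ + B_μ* − (q−1)(t−1) B_μ B_μ*`, where
`μ` is the interleaved partition with `B_μ = Σ_i tⁱ B_{λ⁽ⁿ⁻ⁱ⁾}(q, t^{k+1})`. -/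
theorem stmt19 (n k : ℕ) (hkn : k ≤ n)
    (c : Fin (k + 1) → ℕ → ℕ) (row : Fin k → ℕ)
    (hanti : ∀ i, Antitone (c i))
    (hfin : ∀ i, (Function.support (c i)).Finite)
    (hsize : ∀ i : Fin (k + 1), ∑ᶠ j, c i j = n - (i : ℕ))
    (hw : ∀ j : Fin k,
      c j.castSucc = Function.update (c j.succ) (row j) (c j.succ (row j) + 1))
    (hstrip : ∀ m, c 0 (m + 1) ≤ c (Fin.last k) m) :
    mn 1 0 * mn 0 1 * Bgen (c (Fin.last k)) 1 1 + Bgen (c 0) (-1) 1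
      - (mn 0 1 - 1) * (mn 1 0 - 1) *
          (Bgen (c (Fin.last k)) 1 1 * Bgen (c 0) (-1) 1)
      + (mn 1 0 - 1) *
          ∑ i : Fin k, ∑ j : Fin k,
            (if j ≤ i then
              mn (c i.succ (row i) : ℤ) (row i : ℤ) *
                mn (-(c j.succ (row j) : ℤ)) (-(row j : ℤ))
            else 0)
    = extract k
        (mn 1 0 * mn 0 1 *
            (∑ i : Fin (k + 1), mn 0 (i : ℤ) * Bgen (c i) 1 ((k : ℤ) + 1))
          + (∑ i : Fin (k + 1), mn 0 (-(i : ℤ)) * Bgen (c i) (-1) ((k : ℤ) + 1))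
          - (mn 1 0 - 1) * (mn 0 1 - 1) *
              ((∑ i : Fin (k + 1), mn 0 (i : ℤ) * Bgen (c i) 1 ((k : ℤ) + 1)) *
                (∑ i : Fin (k + 1),
                  mn 0 (-(i : ℤ)) * Bgen (c i) (-1) ((k : ℤ) + 1)))) := by
  classical
  -- recurrences at the Fin level
  have hrecB : ∀ m : Fin k, Bgen (c m.castSucc) 1 1
      = Bgen (c m.succ) 1 1 + mn (c m.succ (row m) : ℤ) (row m : ℤ) := by
    intro m
    rw [hw m, Aux.Bgen_update (hfin m.succ)]
    norm_num
  have hrecB' : ∀ m : Fin k, Bgen (c m.castSucc) (-1) 1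
      = Bgen (c m.succ) (-1) 1 + mn (-(c m.succ (row m) : ℤ)) (-(row m : ℤ)) := by
    intro m
    rw [hw m, Aux.Bgen_update (hfin m.succ)]
    norm_num
  -- ℕ-level recurrences
  have ob1 : ∀ m < k, Aux.nbp k c m = Aux.nbp k c (m + 1) + Aux.nwp k c row m := by
    intro m hm
    simp only [Aux.nbp, Aux.nwp]
    rw [dif_pos (by omega : m < k + 1), dif_pos (by omega : m + 1 < k + 1), dif_pos hm]
    exact hrecB ⟨m, hm⟩
  have ob2 : ∀ m < k, Aux.nbm k c m = Aux.nbm k c (m + 1) + Aux.nwm k c row m := by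
    intro m hm
    simp only [Aux.nbm, Aux.nwm]
    rw [dif_pos (by omega : m < k + 1), dif_pos (by omega : m + 1 < k + 1), dif_pos hm]
    exact hrecB' ⟨m, hm⟩
  have hSkey := Aux.sum_key (Aux.nbp k c) (Aux.nbm k c) (Aux.nwp k c row)
    (Aux.nwm k c row) k ob1 ob2
  -- conversions between Fin sums and range sums
  have hDG : ∑ i : Fin (k + 1), Bgen (c i) 1 1 * Bgen (c i) (-1) 1
      = ∑ m ∈ Finset.range (k + 1), Aux.nbp k c m * Aux.nbm k c m := by
    rw [← Fin.sum_univ_eq_sum_range (fun m => Aux.nbp k c m * Aux.nbm k c m) (k + 1)]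
    exact Finset.sum_congr rfl (fun i _ => by rw [Aux.nbp_coe, Aux.nbm_coe])
  have hCS : ∑ m : Fin k, Bgen (c m.castSucc) 1 1 * Bgen (c m.succ) (-1) 1
      = ∑ m ∈ Finset.range k, Aux.nbp k c m * Aux.nbm k c (m + 1) := by
    rw [← Fin.sum_univ_eq_sum_range (fun m => Aux.nbp k c m * Aux.nbm k c (m + 1)) k]
    exact Finset.sum_congr rfl (fun i _ => by rw [Aux.nbp_cast, Aux.nbm_succ])
  have hSsum : (∑ i : Fin k, ∑ j : Fin k,
        (if j ≤ i then
          mn (c i.succ (row i) : ℤ) (row i : ℤ) *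
            mn (-(c j.succ (row j) : ℤ)) (-(row j : ℤ))
        else 0))
      = ∑ m ∈ Finset.range k, ∑ j ∈ Finset.range (m + 1),
          Aux.nwp k c row m * Aux.nwm k c row j := by
    rw [← Fin.sum_univ_eq_sum_range
      (fun m => ∑ j ∈ Finset.range (m + 1), Aux.nwp k c row m * Aux.nwm k c row j) k]
    apply Finset.sum_congr rfl
    intro i _
    have hik := i.is_lt
    have inner1 : (∑ j : Fin k,
        (if j ≤ i then
          mn (c i.succ (row i) : ℤ) (row i : ℤ) *
            mn (-(c j.succ (row j) : ℤ)) (-(row j : ℤ)) else 0))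
        = ∑ j ∈ Finset.range k,
            (if j ≤ (i : ℕ) then Aux.nwp k c row (i : ℕ) * Aux.nwm k c row j else 0) := by
      rw [← Fin.sum_univ_eq_sum_range
        (fun j => if j ≤ (i : ℕ) then Aux.nwp k c row (i : ℕ) * Aux.nwm k c row j else 0) k]
      apply Finset.sum_congr rfl
      intro j _
      rw [Aux.nwp_coe, Aux.nwm_coe]
      exact if_congr (by rw [Fin.le_def]) rfl rfl
    rw [inner1, ← Finset.sum_filter,
      show (Finset.range k).filter (fun j => j ≤ (i : ℕ)) = Finset.range ((i : ℕ) + 1) by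
        ext x
        simp only [Finset.mem_filter, Finset.mem_range]
        omega]
  have hS : (∑ i : Fin k, ∑ j : Fin k,
        (if j ≤ i then
          mn (c i.succ (row i) : ℤ) (row i : ℤ) *
            mn (-(c j.succ (row j) : ℤ)) (-(row j : ℤ))
        else 0))
      = (∑ i : Fin (k + 1), Bgen (c i) 1 1 * Bgen (c i) (-1) 1)
        - (∑ m : Fin k, Bgen (c m.castSucc) 1 1 * Bgen (c m.succ) (-1) 1)
        - Bgen (c (Fin.last k)) 1 1 * Bgen (c 0) (-1) 1 := by
    rw [hSsum, ← hSkey, ← hDG, ← hCS, Aux.nbp_last, Aux.nbm_zero]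
  -- φ-form of the scaled Bgen sums
  have hSAeq : (∑ i : Fin (k + 1), mn 0 (i : ℤ) * Bgen (c i) 1 ((k : ℤ) + 1))
      = ∑ i : Fin (k + 1), mn 0 (i : ℤ) * Aux.φ k (Bgen (c i) 1 1) :=
    Finset.sum_congr rfl (fun i _ => by rw [Aux.Bgen_eq_phi (hfin i)])
  have hSA'eq : (∑ i : Fin (k + 1), mn 0 (-(i : ℤ)) * Bgen (c i) (-1) ((k : ℤ) + 1))
      = ∑ i : Fin (k + 1), mn 0 (-(i : ℤ)) * Aux.φ k (Bgen (c i) (-1) 1) :=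
    Finset.sum_congr rfl (fun i _ => by rw [Aux.Bgen_eq_phi (hfin i)])
  rw [hSAeq, hSA'eq]
  -- canonical form of the three pieces
  have h1 : mn 1 0 * mn 0 1 * (∑ i : Fin (k + 1), mn 0 (i : ℤ) * Aux.φ k (Bgen (c i) 1 1))
      = ∑ i : Fin (k + 1), mn 1 (1 + (i : ℤ)) * Aux.φ k (Bgen (c i) 1 1) := by
    rw [Finset.mul_sum]
    apply Finset.sum_congr rfl
    intro i _
    have e5 : mn 0 1 * mn 0 (i : ℤ) = mn 0 (1 + (i : ℤ)) := Aux.mn_comb (by ring) (by ring)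
    have e6 : mn 1 0 * mn 0 (1 + (i : ℤ)) = mn 1 (1 + (i : ℤ)) := Aux.mn_comb (by ring) (by ring)
    calc mn 1 0 * mn 0 1 * (mn 0 (i : ℤ) * Aux.φ k (Bgen (c i) 1 1))
        = mn 1 0 * (mn 0 1 * mn 0 (i : ℤ)) * Aux.φ k (Bgen (c i) 1 1) := by ring
      _ = _ := by rw [e5, e6]
  have h3 : (mn 1 0 - 1) * (mn 0 1 - 1) *
        ((∑ i : Fin (k + 1), mn 0 (i : ℤ) * Aux.φ k (Bgen (c i) 1 1)) *
          (∑ i : Fin (k + 1), mn 0 (-(i : ℤ)) * Aux.φ k (Bgen (c i) (-1) 1)))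
      = ∑ i : Fin (k + 1), ∑ j : Fin (k + 1),
          (mn 1 ((i : ℤ) - (j : ℤ) + 1) - mn 0 ((i : ℤ) - (j : ℤ) + 1)
            - (mn 1 ((i : ℤ) - (j : ℤ)) - mn 0 ((i : ℤ) - (j : ℤ))))
          * Aux.φ k (Bgen (c i) 1 1 * Bgen (c j) (-1) 1) := by
    rw [Finset.sum_mul_sum, Finset.mul_sum]
    apply Finset.sum_congr rfl
    intro i _
    rw [Finset.mul_sum]
    apply Finset.sum_congr rfl
    intro j _
    have em : mn 0 (i : ℤ) * mn 0 (-(j : ℤ)) = mn 0 ((i : ℤ) - (j : ℤ)) :=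
      Aux.mn_comb (by ring) (by ring)
    calc (mn 1 0 - 1) * (mn 0 1 - 1) *
          (mn 0 (i : ℤ) * Aux.φ k (Bgen (c i) 1 1) *
            (mn 0 (-(j : ℤ)) * Aux.φ k (Bgen (c j) (-1) 1)))
        = (mn 1 0 - 1) * (mn 0 1 - 1) * (mn 0 (i : ℤ) * mn 0 (-(j : ℤ)))
            * (Aux.φ k (Bgen (c i) 1 1) * Aux.φ k (Bgen (c j) (-1) 1)) := by ring
      _ = (mn 1 0 - 1) * (mn 0 1 - 1) * mn 0 ((i : ℤ) - (j : ℤ))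
            * (Aux.φ k (Bgen (c i) 1 1) * Aux.φ k (Bgen (c j) (-1) 1)) := by rw [em]
      _ = _ := by rw [Aux.expand_qt, ← map_mul]
  rw [h1, h3]
  -- now extract the three pieces
  rw [Aux.extract_sub, Aux.extract_add]
  -- piece 1
  have hT1 : extract k (∑ i : Fin (k + 1), mn 1 (1 + (i : ℤ)) * Aux.φ k (Bgen (c i) 1 1))
      = mn 1 1 * Bgen (c (Fin.last k)) 1 1 := by
    rw [Aux.extract_sum]
    have e : ∀ i : Fin (k + 1), extract k (mn 1 (1 + (i : ℤ)) * Aux.φ k (Bgen (c i) 1 1))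
        = if i = Fin.last k
          then mn 1 ((1 + (i : ℤ)) / ((k : ℤ) + 1)) * Bgen (c i) 1 1 else 0 := fun i => by
      rw [Aux.extract_mn_phi, if_congr (Aux.dvd_qt k i) rfl rfl]
    rw [Finset.sum_congr rfl (fun i _ => e i)]
    rw [Finset.sum_ite_eq' Finset.univ (Fin.last k), if_pos (Finset.mem_univ _)]
    rw [show ((Fin.last k : Fin (k + 1)) : ℤ) = (k : ℤ) from by simp [Fin.val_last],
      show (1 : ℤ) + (k : ℤ) = (k : ℤ) + 1 from by ring,
      Int.ediv_self (by positivity)]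
  -- piece 2
  have hT2 : extract k (∑ i : Fin (k + 1), mn 0 (-(i : ℤ)) * Aux.φ k (Bgen (c i) (-1) 1))
      = Bgen (c 0) (-1) 1 := by
    rw [Aux.extract_sum]
    have e : ∀ i : Fin (k + 1), extract k (mn 0 (-(i : ℤ)) * Aux.φ k (Bgen (c i) (-1) 1))
        = if i = 0
          then mn 0 (-(i : ℤ) / ((k : ℤ) + 1)) * Bgen (c i) (-1) 1 else 0 := fun i => by
      rw [Aux.extract_mn_phi, if_congr (Aux.dvd_st k i) rfl rfl]
    rw [Finset.sum_congr rfl (fun i _ => e i)]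
    rw [Finset.sum_ite_eq' Finset.univ (0 : Fin (k + 1)), if_pos (Finset.mem_univ _)]
    rw [show (((0 : Fin (k + 1)) : ℤ)) = (0 : ℤ) from by simp]
    norm_num [Aux.mn_zero]
  -- piece 3
  have hterm : ∀ i j : Fin (k + 1),
      extract k ((mn 1 ((i : ℤ) - (j : ℤ) + 1) - mn 0 ((i : ℤ) - (j : ℤ) + 1)
          - (mn 1 ((i : ℤ) - (j : ℤ)) - mn 0 ((i : ℤ) - (j : ℤ))))
        * Aux.φ k (Bgen (c i) 1 1 * Bgen (c j) (-1) 1))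
      = (if j = i + 1 then
          (mn 1 (((i : ℤ) - (j : ℤ) + 1) / ((k : ℤ) + 1))
            - mn 0 (((i : ℤ) - (j : ℤ) + 1) / ((k : ℤ) + 1)))
            * (Bgen (c i) 1 1 * Bgen (c j) (-1) 1) else 0)
        - (if j = i then
          (mn 1 (((i : ℤ) - (j : ℤ)) / ((k : ℤ) + 1))
            - mn 0 (((i : ℤ) - (j : ℤ)) / ((k : ℤ) + 1)))
            * (Bgen (c i) 1 1 * Bgen (c j) (-1) 1) else 0) := by
    intro i j
    rw [show (mn 1 ((i : ℤ) - (j : ℤ) + 1) - mn 0 ((i : ℤ) - (j : ℤ) + 1)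
          - (mn 1 ((i : ℤ) - (j : ℤ)) - mn 0 ((i : ℤ) - (j : ℤ))))
        * Aux.φ k (Bgen (c i) 1 1 * Bgen (c j) (-1) 1)
      = mn 1 ((i : ℤ) - (j : ℤ) + 1) * Aux.φ k (Bgen (c i) 1 1 * Bgen (c j) (-1) 1)
        - mn 0 ((i : ℤ) - (j : ℤ) + 1) * Aux.φ k (Bgen (c i) 1 1 * Bgen (c j) (-1) 1)
        - (mn 1 ((i : ℤ) - (j : ℤ)) * Aux.φ k (Bgen (c i) 1 1 * Bgen (c j) (-1) 1)
          - mn 0 ((i : ℤ) - (j : ℤ)) * Aux.φ k (Bgen (c i) 1 1 * Bgen (c j) (-1) 1)) from by ring]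
    rw [Aux.extract_sub, Aux.extract_sub, Aux.extract_sub,
      Aux.extract_mn_phi, Aux.extract_mn_phi, Aux.extract_mn_phi, Aux.extract_mn_phi,
      if_congr (Aux.dvd_off k i j) rfl rfl, if_congr (Aux.dvd_off k i j) rfl rfl,
      if_congr (Aux.dvd_diag k i j) rfl rfl, if_congr (Aux.dvd_diag k i j) rfl rfl]
    split <;> split <;> ring
  have hT3 : extract k (∑ i : Fin (k + 1), ∑ j : Fin (k + 1),
        (mn 1 ((i : ℤ) - (j : ℤ) + 1) - mn 0 ((i : ℤ) - (j : ℤ) + 1)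
          - (mn 1 ((i : ℤ) - (j : ℤ)) - mn 0 ((i : ℤ) - (j : ℤ))))
        * Aux.φ k (Bgen (c i) 1 1 * Bgen (c j) (-1) 1))
      = ((mn 1 0 - mn 0 0) *
          ∑ m : Fin k, Bgen (c m.castSucc) 1 1 * Bgen (c m.succ) (-1) 1)
        + (mn 1 1 - mn 0 1) * (Bgen (c (Fin.last k)) 1 1 * Bgen (c 0) (-1) 1)
        - (mn 1 0 - mn 0 0) *
            ∑ i : Fin (k + 1), Bgen (c i) 1 1 * Bgen (c i) (-1) 1 := by
    rw [Aux.extract_sum]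
    have e1 : ∀ i : Fin (k + 1), extract k (∑ j : Fin (k + 1),
        (mn 1 ((i : ℤ) - (j : ℤ) + 1) - mn 0 ((i : ℤ) - (j : ℤ) + 1)
          - (mn 1 ((i : ℤ) - (j : ℤ)) - mn 0 ((i : ℤ) - (j : ℤ))))
        * Aux.φ k (Bgen (c i) 1 1 * Bgen (c j) (-1) 1))
        = (mn 1 (((i : ℤ) - ((i + 1 : Fin (k + 1)) : ℤ) + 1) / ((k : ℤ) + 1))
            - mn 0 (((i : ℤ) - ((i + 1 : Fin (k + 1)) : ℤ) + 1) / ((k : ℤ) + 1)))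
            * (Bgen (c i) 1 1 * Bgen (c (i + 1)) (-1) 1)
          - (mn 1 0 - mn 0 0) * (Bgen (c i) 1 1 * Bgen (c i) (-1) 1) := by
      intro i
      rw [Aux.extract_sum, Finset.sum_congr rfl (fun j _ => hterm i j),
        Finset.sum_sub_distrib,
        Finset.sum_ite_eq' Finset.univ (i + 1), Finset.sum_ite_eq' Finset.univ i,
        if_pos (Finset.mem_univ _), if_pos (Finset.mem_univ _),
        show ((i : ℤ) - (i : ℤ)) / ((k : ℤ) + 1) = 0 by simp]
    rw [Finset.sum_congr rfl (fun i _ => e1 i), Finset.sum_sub_distrib]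
    congr 1
    · -- the off-diagonal part, split at castSucc/last
      rw [Fin.sum_univ_castSucc]
      congr 1
      · rw [Finset.mul_sum]
        apply Finset.sum_congr rfl
        intro m _
        rw [Fin.coeSucc_eq_succ]
        rw [show ((m.castSucc : Fin (k + 1)) : ℤ) - ((m.succ : Fin (k + 1)) : ℤ) + 1 = 0 by
          push_cast [Fin.coe_castSucc, Fin.val_succ]; ring]
        norm_num
      · rw [Fin.last_add_one]
        rw [show ((Fin.last k : Fin (k + 1)) : ℤ) - (((0 : Fin (k + 1))) : ℤ) + 1
            = (k : ℤ) + 1 by simp [Fin.val_last]]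
        rw [Int.ediv_self (by positivity)]
    · rw [Finset.mul_sum]
  rw [hT1, hT2, hT3, hS, Aux.mn_zero,
    show mn 1 1 = mn 1 0 * mn 0 1 from (Aux.mn_comb (by ring) (by ring)).symm]
  ring

end
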